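/- Let X = (X_1, …, X_{2p}) be a centered Gaussian vector in ℝ^{2p}. Then E[X_1 X_2 ⋯ X_{2p}] = Σ_{σ ∈ Σ(2p)} Π_{i=1}^p E[X_{σ(2i−1)} X_{σ(2i)}] up to the appropriate combinatorial normalization (Wick/Isserlis formula: the sum over pairings of {1,…,2p} of products of pairwise covariances). -/

import Mathlib

open MeasureTheory ProbabilityTheory

namespace IsserlisAux
open Real Filter Finset
open scoped ENNReal NNReal

noncomputable def sg (b : Bool) : ℝ := if b then 1 else -1




lemma integrable_pow_exp (m : ℕ) :
    Integrable (fun x : ℝ => x ^ m * Real.exp (-(2⁻¹:ℝ) * x ^ 2)) := by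
  have h := integrable_rpow_mul_exp_neg_mul_sq (b := (2⁻¹:ℝ)) (by norm_num)
    (s := (m:ℝ)) (by exact_mod_cast neg_one_lt_zero.trans_le (Nat.cast_nonneg m))
  simpa [Real.rpow_natCast] using h

noncomputable def J (m : ℕ) : ℝ := ∫ x : ℝ, x ^ m * Real.exp (-(2⁻¹:ℝ) * x ^ 2)

lemma J_rec (m : ℕ) : J (m + 2) = (m + 1) * J m := by
  have hd : ∀ x : ℝ, HasDerivAt (fun x : ℝ => x ^ (m+1) * Real.exp (-(2⁻¹:ℝ) * x ^ 2))
      ((m+1 : ℝ) * (x ^ m * Real.exp (-(2⁻¹:ℝ)*x^2)) - x ^ (m+2) * Real.exp (-(2⁻¹:ℝ)*x^2)) x := by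
    intro x
    have h1 : HasDerivAt (fun x : ℝ => x ^ (m+1)) ((m+1 : ℝ) * x ^ m) x := by
      simpa using hasDerivAt_pow (m+1) x
    have h2 : HasDerivAt (fun x : ℝ => Real.exp (-(2⁻¹:ℝ) * x^2))
        (Real.exp (-(2⁻¹:ℝ)*x^2) * (-(2⁻¹:ℝ) * (2*x^1))) x :=
      ((hasDerivAt_pow 2 x).const_mul (-(2⁻¹:ℝ))).exp
    have h : HasDerivAt (fun x : ℝ => x ^ (m+1) * Real.exp (-(2⁻¹:ℝ) * x ^ 2)) _ x := h1.mul h2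
    convert h using 1
    ring
  have hint' : Integrable (fun x : ℝ =>
      (m+1 : ℝ) * (x ^ m * Real.exp (-(2⁻¹:ℝ)*x^2)) - x ^ (m+2) * Real.exp (-(2⁻¹:ℝ)*x^2)) :=
    ((integrable_pow_exp m).const_mul _).sub (integrable_pow_exp (m+2))
  have h0 := integral_eq_zero_of_hasDerivAt_of_integrable hd hint' (integrable_pow_exp (m+1))
  rw [integral_sub ((integrable_pow_exp m).const_mul _) (integrable_pow_exp (m+2)),
    MeasureTheory.integral_const_mul] at h0
  have : (m+1 : ℝ) * J m - J (m+2) = 0 := h0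
  linarith



lemma g01_density : gaussianReal 0 1 =
    (volume : Measure ℝ).withDensity (fun x => ((gaussianPDFReal 0 1 x).toNNReal : ℝ≥0∞)) := by
  rw [gaussianReal_of_var_ne_zero 0 one_ne_zero]
  rfl

lemma integral_g01 (f : ℝ → ℝ) :
    ∫ x, f x ∂(gaussianReal 0 1) = ∫ x : ℝ, gaussianPDFReal 0 1 x * f x := by
  rw [g01_density, integral_withDensity_eq_integral_smul
    ((measurable_gaussianPDFReal 0 1).real_toNNReal) f]
  congr 1
  ext x
  rw [NNReal.smul_def, Real.coe_toNNReal _ (gaussianPDFReal_nonneg 0 1 x), smul_eq_mul]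

lemma integrable_g01 (f : ℝ → ℝ) (hf : Integrable (fun x : ℝ => gaussianPDFReal 0 1 x * f x)) :
    Integrable f (gaussianReal 0 1) := by
  rw [g01_density, integrable_withDensity_iff_integrable_smul
    ((measurable_gaussianPDFReal 0 1).real_toNNReal)]
  refine hf.congr (ae_of_all _ fun x => ?_)
  simp only [NNReal.smul_def, Real.coe_toNNReal _ (gaussianPDFReal_nonneg 0 1 x), smul_eq_mul]

lemma pdf01_eq (x : ℝ) : gaussianPDFReal 0 1 x = (√(2 * π))⁻¹ * Real.exp (-(2⁻¹:ℝ) * x ^ 2) := by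
  rw [gaussianPDFReal]
  norm_num
  left; ring


noncomputable def SG (m : ℕ) : ℝ := ∫ x, x ^ m ∂(gaussianReal 0 1)

lemma SG_eq (m : ℕ) : SG m = (√(2 * π))⁻¹ * J m := by
  rw [SG, integral_g01, J, ← MeasureTheory.integral_const_mul]
  congr 1; ext x
  rw [pdf01_eq]; ring

lemma SG_zero : SG 0 = 1 := by
  simp [SG]

lemma SG_rec (m : ℕ) : SG (m + 2) = (m + 1) * SG m := by
  rw [SG_eq, SG_eq, J_rec]; ring

lemma integrable_pow_g01 (m : ℕ) : Integrable (fun x : ℝ => x ^ m) (gaussianReal 0 1) := by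
  refine integrable_g01 _ ?_
  have : Integrable (fun x : ℝ => (√(2 * π))⁻¹ * (x ^ m * Real.exp (-(2⁻¹:ℝ) * x ^ 2))) :=
    (integrable_pow_exp m).const_mul _
  refine this.congr (ae_of_all _ fun x => ?_)
  show (√(2 * π))⁻¹ * (x ^ m * Real.exp (-(2⁻¹:ℝ) * x ^ 2)) = gaussianPDFReal 0 1 x * x ^ m
  rw [pdf01_eq]; ring

lemma g0v_eq_map (v : ℝ≥0) :
    gaussianReal 0 v = (gaussianReal 0 1).map (fun x => (√v) * x) := by
  have h := gaussianReal_map_const_mul (μ := 0) (v := 1) (√v)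
  rw [h]
  congr 1
  · simp
  · ext
    simp [Real.sq_sqrt v.2]

lemma integral_pow_g0v (v : ℝ≥0) (m : ℕ) :
    ∫ x, x ^ m ∂(gaussianReal 0 v) = (√v) ^ m * SG m := by
  rw [g0v_eq_map, integral_map (by fun_prop) (by fun_prop)]
  simp_rw [mul_pow]
  rw [MeasureTheory.integral_const_mul, SG]

lemma integrable_pow_g0v (v : ℝ≥0) (m : ℕ) :
    Integrable (fun x : ℝ => x ^ m) (gaussianReal 0 v) := by
  rw [g0v_eq_map, integrable_map_measure (by fun_prop) (by fun_prop)]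
  have : Integrable (fun x : ℝ => (√v) ^ m * x ^ m) (gaussianReal 0 1) :=
    (integrable_pow_g01 m).const_mul _
  refine this.congr (ae_of_all _ fun x => ?_)
  simp [Function.comp, mul_pow]

lemma integral_sq_g0v (v : ℝ≥0) : ∫ x, x ^ 2 ∂(gaussianReal 0 v) = v := by
  rw [integral_pow_g0v]
  have : SG 2 = 1 := by
    have := SG_rec 0
    rw [SG_zero] at this
    norm_num at this
    exact this
  rw [this, Real.sq_sqrt (NNReal.coe_nonneg v), mul_one]

lemma SG_factorial (p : ℕ) :
    SG (2 * p) * (2 ^ p * Nat.factorial p) = Nat.factorial (2 * p) := by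
  induction p with
  | zero => simp [SG_zero]
  | succ k ih =>
    have h1 : 2 * (k + 1) = 2 * k + 2 := by ring
    rw [h1, SG_rec]
    have h2 : (2 * k + 2).factorial = (2*k).factorial * ((2*k+1) * (2*k+2)) := by
      rw [show 2*k+2 = (2*k+1)+1 by ring, Nat.factorial_succ, Nat.factorial_succ]
      ring
    rw [h2, Nat.factorial_succ]
    push_cast
    push_cast at ih
    linear_combination ((2*(k:ℝ)+1)*(2*k+2)) * ih




lemma sum_sg_pow (m : ℕ) : ∑ b : Bool, sg b ^ m = if Odd m then 0 else 2 := by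
  rcases Nat.even_or_odd m with h | h
  · simp [sg, h.neg_one_pow, Nat.not_odd_iff_even.2 h]
  · simp [sg, h.neg_one_pow, h]

/-- Key counting lemma. -/
lemma sum_eps {T ι : Type*} [Fintype T] [DecidableEq T] [Fintype ι] [DecidableEq ι]
    (hcard : Fintype.card T = Fintype.card ι) (F : T → ι) :
    ∑ ε : ι → Bool, (∏ i, sg (ε i)) * ∏ t, sg (ε (F t))
      = if Function.Bijective F then (2:ℝ) ^ (Fintype.card ι) else 0 := by
  have hfib : ∀ ε : ι → Bool, ∏ t, sg (ε (F t))
      = ∏ i, sg (ε i) ^ (univ.filter (fun t => F t = i)).card := by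
    intro ε
    rw [← Finset.prod_fiberwise_of_maps_to (g := F) (fun t _ => mem_univ (F t))
      (fun t => sg (ε (F t)))]
    refine Finset.prod_congr rfl fun i _ => ?_
    have hcg : ∀ t ∈ univ.filter (fun t => F t = i), sg (ε (F t)) = sg (ε i) :=
      fun t ht => by rw [(Finset.mem_filter.1 ht).2]
    rw [Finset.prod_congr rfl hcg, Finset.prod_const]
  have hmerge : ∀ ε : ι → Bool, (∏ i, sg (ε i)) * ∏ t, sg (ε (F t))
      = ∏ i, sg (ε i) ^ ((univ.filter (fun t => F t = i)).card + 1) := by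
    intro ε
    rw [hfib, ← Finset.prod_mul_distrib]
    exact Finset.prod_congr rfl fun i _ => (pow_succ' _ _).symm
  simp_rw [hmerge]
  have hswap := Finset.prod_univ_sum (t := fun _ : ι => (univ : Finset Bool))
    (f := fun i b => sg b ^ ((univ.filter (fun t => F t = i)).card + 1))
  rw [Fintype.piFinset_univ] at hswap
  rw [← hswap]
  simp_rw [sum_sg_pow]
  have hsum : ∑ i : ι, (univ.filter (fun t => F t = i)).card = Fintype.card T := by
    rw [← Finset.card_univ, Finset.card_eq_sum_card_fiberwise (fun t _ => mem_univ (F t))]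
  by_cases hodd : ∀ i : ι, ¬ Odd ((univ.filter (fun t => F t = i)).card + 1)
  ·
    have hone : ∀ i : ι, (univ.filter (fun t => F t = i)).card = 1 := by
      have hge : ∀ i ∈ (univ : Finset ι), 1 ≤ (univ.filter (fun t => F t = i)).card := by
        intro i _
        exact (Nat.not_even_iff_odd.1
          (Nat.even_add_one.1 (Nat.not_odd_iff_even.mp (hodd i)))).pos
      have hsum' : ∑ i : ι, (univ.filter (fun t => F t = i)).card = ∑ _i : ι, 1 := by
        rw [hsum, hcard]; simp
      intro i
      have := (Finset.sum_eq_sum_iff_of_le hge).1 hsum'.symm i (mem_univ i)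
      omega
    have hbij : Function.Bijective F := by
      rw [Fintype.bijective_iff_injective_and_card]
      refine ⟨fun t t' htt => ?_, hcard⟩
      have h1 := hone (F t')
      rw [Finset.card_eq_one] at h1
      obtain ⟨u, hu⟩ := h1
      have ht1 : t ∈ univ.filter (fun s => F s = F t') := by simp [htt]
      have ht2 : t' ∈ univ.filter (fun s => F s = F t') := by simp
      rw [hu, Finset.mem_singleton] at ht1 ht2
      rw [ht1, ht2]
    rw [if_pos hbij]
    rw [Finset.prod_congr rfl (fun i _ => if_neg (hodd i)), Finset.prod_const]
    simp
  · push_neg at hodd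
    obtain ⟨i, hi⟩ := hodd
    have hFnbij : ¬ Function.Bijective F := by
      intro hbij
      have : (univ.filter (fun t => F t = i)).card = 1 := by
        rw [Finset.card_eq_one]
        refine ⟨(Equiv.ofBijective F hbij).symm i, ?_⟩
        ext t
        simp only [Finset.mem_filter, Finset.mem_univ, true_and, Finset.mem_singleton]
        constructor
        · intro h
          have : F t = F ((Equiv.ofBijective F hbij).symm i) := by
            rw [h]
            exact ((Equiv.ofBijective F hbij).apply_symm_apply i).symm
          exact hbij.1 this
        · intro h; rw [h]; exact (Equiv.ofBijective F hbij).apply_symm_apply i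
      rw [this] at hi
      exact (Nat.not_odd_iff_even.2 (by norm_num)) hi
    rw [if_neg hFnbij]
    exact Finset.prod_eq_zero (mem_univ i) (if_pos hi)


lemma sum_bij_perm {α : Type*} [Fintype α] [DecidableEq α] (h : (α → α) → ℝ) :
    ∑ f : α → α, (if Function.Bijective f then h f else 0) = ∑ σ : Equiv.Perm α, h ⇑σ := by
  rw [← Finset.sum_filter]
  refine (Finset.sum_bij (fun (σ : Equiv.Perm α) _ => ⇑σ) ?_ ?_ ?_ ?_).symm
  · intro σ _
    simp [σ.bijective]
  · intro σ _ τ _ hστ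
    exact Equiv.coe_fn_injective hστ
  · intro f hf
    rw [Finset.mem_filter] at hf
    exact ⟨Equiv.ofBijective f hf.2, Finset.mem_univ _, rfl⟩
  · intro σ _
    rfl

/-- Polarization identity. -/
lemma polarization (n : ℕ) (x : Fin n → ℝ) :
    ∑ ε : Fin n → Bool, (∏ i, sg (ε i)) * (∑ i, sg (ε i) * x i) ^ n
      = 2 ^ n * (Nat.factorial n) * ∏ i, x i := by
  have hpow : ∀ ε : Fin n → Bool, (∑ i, sg (ε i) * x i) ^ n
      = ∑ f : Fin n → Fin n, ∏ k, (sg (ε (f k)) * x (f k)) := by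
    intro ε
    have h1 : (∑ i, sg (ε i) * x i) ^ n = ∏ _k : Fin n, (∑ i, sg (ε i) * x i) := by
      rw [Finset.prod_const, Finset.card_univ, Fintype.card_fin]
    rw [h1]
    have hswap := Finset.prod_univ_sum (t := fun _ : Fin n => (univ : Finset (Fin n)))
      (f := fun _k i => sg (ε i) * x i)
    rw [Fintype.piFinset_univ] at hswap
    rw [hswap]
  simp_rw [hpow, Finset.mul_sum]
  rw [Finset.sum_comm]
  have hterm : ∀ f : Fin n → Fin n,
      ∑ ε : Fin n → Bool, (∏ i, sg (ε i)) * ∏ k, (sg (ε (f k)) * x (f k))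
        = (if Function.Bijective f then (2:ℝ) ^ n else 0) * ∏ k, x (f k) := by
    intro f
    have : ∀ ε : Fin n → Bool, (∏ i, sg (ε i)) * ∏ k, (sg (ε (f k)) * x (f k))
        = ((∏ i, sg (ε i)) * ∏ k, sg (ε (f k))) * ∏ k, x (f k) := by
      intro ε
      rw [Finset.prod_mul_distrib]
      ring
    simp_rw [this]
    rw [← Finset.sum_mul, sum_eps (by simp) f, Fintype.card_fin]
  simp_rw [hterm, ite_mul, zero_mul]
  rw [sum_bij_perm (fun f => (2:ℝ)^n * ∏ k, x (f k))]
  have : ∀ σ : Equiv.Perm (Fin n), (2:ℝ)^n * ∏ k, x (σ k) = 2^n * ∏ i, x i := by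
    intro σ
    rw [Equiv.prod_comp σ x]
  simp_rw [this]
  rw [Finset.sum_const, Finset.card_univ, Fintype.card_perm, Fintype.card_fin, nsmul_eq_mul]
  ring


def pb (p : ℕ) : Fin p × Bool → Fin (2*p) :=
  fun t => ⟨2 * t.1.val + (if t.2 then 1 else 0), by
    have := t.1.isLt; rcases t.2 with _|_ <;> simp <;> omega⟩

lemma pb_bijective (p : ℕ) : Function.Bijective (pb p) := by
  rw [Fintype.bijective_iff_injective_and_card]
  constructor
  · rintro ⟨k, b⟩ ⟨k', b'⟩ h
    have h' : 2 * k.val + (if b then 1 else 0) = 2 * k'.val + (if b' then 1 else 0) :=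
      congrArg Fin.val h
    have hb : b = b' := by cases b <;> cases b' <;> simp at h' ⊢ <;> omega
    subst hb
    have hk : k.val = k'.val := by cases b <;> simp at h' <;> omega
    exact Prod.ext (Fin.ext hk) rfl
  · simp [Fintype.card_prod, mul_comm]

/-- aux : the function built from a `p`-tuple of pairs. -/
def FF {p : ℕ} (g : Fin p → Fin (2*p) × Fin (2*p)) : Fin p × Bool → Fin (2*p) :=
  fun t => cond t.2 (g t.1).2 (g t.1).1

lemma lt2a {p : ℕ} (k : Fin p) : 2*k.val < 2*p := by have := k.isLt; omega

lemma lt2b {p : ℕ} (k : Fin p) : 2*k.val+1 < 2*p := by have := k.isLt; omega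

lemma pairing (p : ℕ) (a : Fin (2*p) → Fin (2*p) → ℝ) :
    ∑ ε : Fin (2*p) → Bool, (∏ i, sg (ε i)) *
        (∑ i, ∑ j, sg (ε i) * sg (ε j) * a i j) ^ p
      = 2 ^ (2*p) * ∑ σ : Equiv.Perm (Fin (2*p)), ∏ k : Fin p,
          a (σ ⟨2*k.val, lt2a k⟩) (σ ⟨2*k.val+1, lt2b k⟩) := by
  have hpow : ∀ ε : Fin (2*p) → Bool, (∑ i, ∑ j, sg (ε i) * sg (ε j) * a i j) ^ p
      = ∑ g : Fin p → Fin (2*p) × Fin (2*p),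
          ∏ k, (sg (ε (g k).1) * sg (ε (g k).2) * a (g k).1 (g k).2) := by
    intro ε
    rw [← Fintype.sum_prod_type (f := fun q : Fin (2*p) × Fin (2*p) =>
      sg (ε q.1) * sg (ε q.2) * a q.1 q.2)]
    have h1 : (∑ q : Fin (2*p) × Fin (2*p), sg (ε q.1) * sg (ε q.2) * a q.1 q.2) ^ p
        = ∏ _k : Fin p, (∑ q : Fin (2*p) × Fin (2*p), sg (ε q.1) * sg (ε q.2) * a q.1 q.2) := by
      rw [Finset.prod_const, Finset.card_univ, Fintype.card_fin]
    rw [h1]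
    have hswap := Finset.prod_univ_sum
      (t := fun _ : Fin p => (univ : Finset (Fin (2*p) × Fin (2*p))))
      (f := fun _k q => sg (ε q.1) * sg (ε q.2) * a q.1 q.2)
    rw [Fintype.piFinset_univ] at hswap
    rw [hswap]
  simp_rw [hpow, Finset.mul_sum]
  rw [Finset.sum_comm]
  have hterm : ∀ g : Fin p → Fin (2*p) × Fin (2*p),
      ∑ ε : Fin (2*p) → Bool, (∏ i, sg (ε i)) *
          ∏ k, (sg (ε (g k).1) * sg (ε (g k).2) * a (g k).1 (g k).2)
        = (if Function.Bijective (FF g) then (2:ℝ) ^ (2*p) else 0)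
            * ∏ k, a (g k).1 (g k).2 := by
    intro g
    have hsplit : ∀ ε : Fin (2*p) → Bool,
        (∏ i, sg (ε i)) * ∏ k, (sg (ε (g k).1) * sg (ε (g k).2) * a (g k).1 (g k).2)
        = ((∏ i, sg (ε i)) * ∏ t : Fin p × Bool, sg (ε (FF g t))) * ∏ k, a (g k).1 (g k).2 := by
      intro ε
      have h2 : ∏ t : Fin p × Bool, sg (ε (FF g t))
          = ∏ k : Fin p, (sg (ε (g k).1) * sg (ε (g k).2)) := by
        rw [Fintype.prod_prod_type (f := fun t : Fin p × Bool => sg (ε (FF g t)))]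
        refine Finset.prod_congr rfl fun k _ => ?_
        rw [Fintype.prod_bool]
        exact mul_comm _ _
      rw [h2, mul_assoc, ← Finset.prod_mul_distrib]
    simp_rw [hsplit]
    rw [← Finset.sum_mul, sum_eps (by simp [mul_comm]) (FF g), Fintype.card_fin]
  simp_rw [hterm, ite_mul, zero_mul]
  rw [← Finset.sum_filter]
  refine (Finset.sum_bij
    (fun (σ : Equiv.Perm (Fin (2*p))) _ =>
      (fun k : Fin p => (σ ⟨2*k.val, lt2a k⟩,
        σ ⟨2*k.val+1, lt2b k⟩)))
    ?_ ?_ ?_ ?_).symm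
  · intro σ _
    rw [Finset.mem_filter]
    refine ⟨Finset.mem_univ _, ?_⟩
    have hFF : FF (fun k : Fin p => (σ ⟨2*k.val, lt2a k⟩,
        σ ⟨2*k.val+1, lt2b k⟩)) = σ ∘ pb p := by
      funext t
      rcases t with ⟨k, b⟩
      cases b <;> rfl
    rw [hFF]
    exact σ.bijective.comp (pb_bijective p)
  · intro σ _ τ _ h
    ext m
    have hm2 : m.val / 2 < p := by have := m.isLt; omega
    have hk := congrFun h ⟨m.val / 2, hm2⟩
    rcases Nat.mod_two_eq_zero_or_one m.val with hm | hm
    · have hmeq : (⟨2 * (m.val / 2), by omega⟩ : Fin (2*p)) = m := Fin.ext (show 2 * (m.val / 2) = m.val by omega)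
      have := congrArg Prod.fst hk
      simp only at this
      rw [hmeq] at this
      exact congrArg Fin.val this
    · have hmeq : (⟨2 * (m.val / 2) + 1, by omega⟩ : Fin (2*p)) = m := Fin.ext (show 2 * (m.val / 2) + 1 = m.val by omega)
      have := congrArg Prod.snd hk
      simp only at this
      rw [hmeq] at this
      exact congrArg Fin.val this
  · intro g hg
    rw [Finset.mem_filter] at hg
    obtain ⟨-, hg⟩ := hg
    refine ⟨(Equiv.ofBijective (pb p) (pb_bijective p)).symm.trans
      (Equiv.ofBijective (FF g) hg), Finset.mem_univ _, ?_⟩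
    funext k
    have h1 : (Equiv.ofBijective (pb p) (pb_bijective p)).symm
        (⟨2*k.val, lt2a k⟩ : Fin (2*p)) = (k, false) := by
      rw [Equiv.symm_apply_eq]
      exact Fin.ext rfl
    have h2 : (Equiv.ofBijective (pb p) (pb_bijective p)).symm
        (⟨2*k.val+1, lt2b k⟩ : Fin (2*p)) = (k, true) := by
      rw [Equiv.symm_apply_eq]
      exact Fin.ext rfl
    refine Prod.ext ?_ ?_
    · show (Equiv.ofBijective (FF g) hg) ((Equiv.ofBijective (pb p) (pb_bijective p)).symm _) = _
      rw [h1]; rfl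
    · show (Equiv.ofBijective (FF g) hg) ((Equiv.ofBijective (pb p) (pb_bijective p)).symm _) = _
      rw [h2]; rfl
  · intro σ _
    rfl


lemma lincomb_moment {Ω : Type*} [MeasurableSpace Ω] (μ : Measure Ω) [IsProbabilityMeasure μ]
    {n : ℕ} (X : Fin n → Ω → ℝ) (hXm : ∀ i, Measurable (X i))
    (hint2 : ∀ i j, Integrable (fun ω => X i ω * X j ω) μ)
    (c : Fin n → ℝ) {v : ℝ≥0}
    (hv : Measure.map (fun ω => ∑ i, c i * X i ω) μ = gaussianReal 0 v) (p : ℕ) :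
    (∫ ω, (∑ i, c i * X i ω) ^ (2*p) ∂μ
      = SG (2*p) * (∑ i, ∑ j, c i * c j * ∫ ω, X i ω * X j ω ∂μ) ^ p)
    ∧ Integrable (fun ω => (∑ i, c i * X i ω) ^ (2*p)) μ := by
  have hSmeas : Measurable (fun ω => ∑ i, c i * X i ω) :=
    Finset.measurable_sum _ fun i _ => (hXm i).const_mul _
  have hmom : ∀ m : ℕ, ∫ ω, (∑ i, c i * X i ω) ^ m ∂μ = (√v) ^ m * SG m := by
    intro m
    calc ∫ ω, (∑ i, c i * X i ω) ^ m ∂μ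
        = ∫ x, x ^ m ∂(Measure.map (fun ω => ∑ i, c i * X i ω) μ) :=
          (integral_map hSmeas.aemeasurable
            ((measurable_id.pow_const m).aestronglyMeasurable)).symm
      _ = (√v) ^ m * SG m := by rw [hv, integral_pow_g0v]
  have hsq : ∫ ω, (∑ i, c i * X i ω) ^ 2 ∂μ
      = ∑ i, ∑ j, c i * c j * ∫ ω, X i ω * X j ω ∂μ := by
    have hexp : ∀ ω, (∑ i, c i * X i ω) ^ 2
        = ∑ i, ∑ j, c i * c j * (X i ω * X j ω) := by
      intro ω
      rw [sq, Finset.sum_mul_sum]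
      exact Finset.sum_congr rfl fun i _ => Finset.sum_congr rfl fun j _ => by ring
    rw [integral_congr_ae (ae_of_all _ hexp),
      integral_finset_sum _ (fun i _ => integrable_finset_sum _
        (fun j _ => (hint2 i j).const_mul _))]
    refine Finset.sum_congr rfl fun i _ => ?_
    rw [integral_finset_sum _ (fun j _ => (hint2 i j).const_mul _)]
    exact Finset.sum_congr rfl fun j _ => MeasureTheory.integral_const_mul _ _
  have hvval : (v : ℝ) = ∑ i, ∑ j, c i * c j * ∫ ω, X i ω * X j ω ∂μ := by
    rw [← hsq, hmom 2, Real.sq_sqrt (NNReal.coe_nonneg v)]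
    have h2 : SG 2 = 1 := by have := SG_rec 0; rw [SG_zero] at this; norm_num at this; exact this
    rw [h2, mul_one]
  constructor
  · rw [hmom (2*p), ← hvval, pow_mul, Real.sq_sqrt (NNReal.coe_nonneg v), mul_comm]
  · have h := (integrable_map_measure (μ := μ) (g := fun x : ℝ => x ^ (2*p))
      ((measurable_id.pow_const (2*p)).aestronglyMeasurable) hSmeas.aemeasurable).mp
    have h2 : Integrable (fun x : ℝ => x ^ (2*p))
        (Measure.map (fun ω => ∑ i, c i * X i ω) μ) := by
      rw [hv]; exact integrable_pow_g0v v (2*p)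
    exact h h2


end IsserlisAux
open IsserlisAux in
/-- Isserlis/Wick theorem: for a centered Gaussian vector `X = (X_1, …, X_{2p})`,
`E[X_1 ⋯ X_{2p}]` equals the sum over pairings of products of pairwise covariances, written
as a normalized sum over all permutations:
`E[∏ X_i] = (2^p p!)⁻¹ ∑_{σ ∈ Σ(2p)} ∏_{i=1}^p E[X_{σ(2i−1)} X_{σ(2i)}]`. -/
theorem isserlis_wick {Ω : Type*} [MeasurableSpace Ω] (μ : Measure Ω)
    [IsProbabilityMeasure μ] (p : ℕ) (hp : 0 < p)
    (X : Fin (2 * p) → Ω → ℝ) (hXm : ∀ i, Measurable (X i))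
    (hGauss : ∀ c : Fin (2 * p) → ℝ, ∃ v : NNReal,
      Measure.map (fun ω => ∑ i, c i * X i ω) μ = gaussianReal 0 v)
    (hint : Integrable (fun ω => ∏ i, X i ω) μ)
    (hint2 : ∀ i j, Integrable (fun ω => X i ω * X j ω) μ) :
    ∫ ω, ∏ i, X i ω ∂μ
      = ((2 ^ p * Nat.factorial p : ℝ))⁻¹ *
        ∑ σ : Equiv.Perm (Fin (2 * p)), ∏ i : Fin p,
          ∫ ω, X (σ ⟨2 * i.val, by have := i.isLt; omega⟩) ω *
               X (σ ⟨2 * i.val + 1, by have := i.isLt; omega⟩) ω ∂μ := by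
  classical
  have hLM : ∀ ε : Fin (2*p) → Bool,
      (∫ ω, (∑ i, sg (ε i) * X i ω) ^ (2*p) ∂μ
        = SG (2*p) * (∑ i, ∑ j, sg (ε i) * sg (ε j) * ∫ ω, X i ω * X j ω ∂μ) ^ p)
      ∧ Integrable (fun ω => (∑ i, sg (ε i) * X i ω) ^ (2*p)) μ := by
    intro ε
    obtain ⟨v, hv⟩ := hGauss (fun i => sg (ε i))
    exact lincomb_moment μ X hXm hint2 _ hv p
  have hpt : ∀ ω, ((2:ℝ)^(2*p) * ((2*p).factorial : ℝ)) * ∏ i, X i ω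
      = ∑ ε : Fin (2*p) → Bool, (∏ i, sg (ε i)) * (∑ i, sg (ε i) * X i ω) ^ (2*p) :=
    fun ω => (polarization (2*p) (fun i => X i ω)).symm
  have h1 : ((2:ℝ)^(2*p) * ((2*p).factorial : ℝ)) * ∫ ω, ∏ i, X i ω ∂μ
      = SG (2*p) * (2^(2*p) * ∑ σ : Equiv.Perm (Fin (2*p)), ∏ k : Fin p,
          ∫ ω, X (σ ⟨2*k.val, by have := k.isLt; omega⟩) ω *
               X (σ ⟨2*k.val+1, by have := k.isLt; omega⟩) ω ∂μ) := by
    rw [← MeasureTheory.integral_const_mul]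
    rw [integral_congr_ae (ae_of_all _ hpt)]
    rw [integral_finset_sum _ (fun ε _ => ((hLM ε).2.const_mul _))]
    calc ∑ ε : Fin (2*p) → Bool, ∫ ω, (∏ i, sg (ε i)) * (∑ i, sg (ε i) * X i ω)^(2*p) ∂μ
        = ∑ ε : Fin (2*p) → Bool, (∏ i, sg (ε i)) *
            (SG (2*p) * (∑ i, ∑ j, sg (ε i) * sg (ε j) * ∫ ω, X i ω * X j ω ∂μ) ^ p) := by
          refine Finset.sum_congr rfl fun ε _ => ?_
          rw [MeasureTheory.integral_const_mul, (hLM ε).1]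
      _ = SG (2*p) * ∑ ε : Fin (2*p) → Bool, (∏ i, sg (ε i)) *
            (∑ i, ∑ j, sg (ε i) * sg (ε j) * ∫ ω, X i ω * X j ω ∂μ) ^ p := by
          rw [Finset.mul_sum]; exact Finset.sum_congr rfl fun ε _ => by ring
      _ = _ := by
          rw [pairing p (fun i j => ∫ ω, X i ω * X j ω ∂μ)]
  have hfact := SG_factorial p
  have hne2 : ((2*p).factorial : ℝ) ≠ 0 := Nat.cast_ne_zero.2 (Nat.factorial_ne_zero _)
  have hne : ((2:ℝ)^(2*p) * ((2*p).factorial : ℝ)) ≠ 0 :=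
    mul_ne_zero (pow_ne_zero _ two_ne_zero) hne2
  have hne3 : ((2:ℝ)^p * (p.factorial : ℝ)) ≠ 0 :=
    mul_ne_zero (pow_ne_zero _ two_ne_zero) (Nat.cast_ne_zero.2 (Nat.factorial_ne_zero _))
  refine mul_left_cancel₀ hne ?_
  rw [h1]
  have hSG : SG (2*p) = ((2*p).factorial : ℝ) / ((2:ℝ)^p * (p.factorial : ℝ)) := by
    rw [eq_div_iff hne3]; exact_mod_cast hfact
  rw [hSG]
  field_simp
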